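/- Fix α with 0 < α < π/2. For every r ∈ (−1, 1), the function g(r) = arccos r − cos α · arccos( r·cos α / √(1 − r²·sin²α) ) is differentiable at r with derivative g′(r) = − 2·√(1 − r²)·sin²α / ( r²·cos(2α) − r² + 2 ), and this derivative is strictly negative. -/

import Mathlib

open Real

/-- The time difference `δT_b(r)` is differentiable on `(-1, 1)` with the explicit
strictly negative derivative given in the paper. -/
theorem deltaTb_hasDerivAt (α : ℝ) (hα₀ : 0 < α) (hα₁ : α < π / 2)
    (r : ℝ) (hr : r ∈ Set.Ioo (-1 : ℝ) 1) :
    HasDerivAt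
      (fun r : ℝ => arccos r - cos α * arccos (r * cos α / Real.sqrt (1 - r ^ 2 * sin α ^ 2)))
      (-(2 * Real.sqrt (1 - r ^ 2) * sin α ^ 2 / (r ^ 2 * cos (2 * α) - r ^ 2 + 2))) r ∧
    -(2 * Real.sqrt (1 - r ^ 2) * sin α ^ 2 / (r ^ 2 * cos (2 * α) - r ^ 2 + 2)) < 0 := by
  obtain ⟨hr1, hr2⟩ := hr
  have hπ : α < π := lt_trans hα₁ (by linarith [pi_pos])
  have hs : 0 < sin α := sin_pos_of_pos_of_lt_pi hα₀ hπ
  have hc : 0 < cos α := cos_pos_of_mem_Ioo ⟨by linarith [pi_pos], hα₁⟩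
  have hsc : sin α ^ 2 + cos α ^ 2 = 1 := sin_sq_add_cos_sq α
  set s := sin α with hs_def
  set c := cos α with hc_def
  have hr2' : r ^ 2 < 1 := by nlinarith
  have hD2 : 0 < 1 - r ^ 2 * s ^ 2 := by nlinarith
  have hE2 : 0 < 1 - r ^ 2 := by nlinarith
  set D := Real.sqrt (1 - r ^ 2 * s ^ 2) with hD_def
  set E := Real.sqrt (1 - r ^ 2) with hE_def
  have hDpos : 0 < D := Real.sqrt_pos.mpr hD2
  have hEpos : 0 < E := Real.sqrt_pos.mpr hE2
  have hDsq : D ^ 2 = 1 - r ^ 2 * s ^ 2 := Real.sq_sqrt hD2.le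
  have hEsq : E ^ 2 = 1 - r ^ 2 := Real.sq_sqrt hE2.le
  -- denominator identity
  have hden : r ^ 2 * cos (2 * α) - r ^ 2 + 2 = 2 * D ^ 2 := by
    rw [Real.cos_two_mul, hDsq, ← hc_def]
    linear_combination 2 * r ^ 2 * hsc
  -- inner bound
  have hfsq : (r * c / D) ^ 2 < 1 := by
    rw [div_pow, div_lt_one (by positivity), hDsq]
    nlinarith
  have hf1 : r * c / D ≠ 1 := fun h => by rw [h] at hfsq; norm_num at hfsq
  have hfm1 : r * c / D ≠ -1 := fun h => by rw [h] at hfsq; norm_num at hfsq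
  -- sqrt(1 - f^2) = E / D
  have hkey : Real.sqrt (1 - (r * c / D) ^ 2) = E / D := by
    have h1 : 1 - (r * c / D) ^ 2 = (E / D) ^ 2 := by
      field_simp
      linear_combination hDsq - hEsq - r ^ 2 * hsc
    rw [h1, Real.sqrt_sq (by positivity)]
  -- derivative of inner sqrt argument
  have hu : HasDerivAt (fun x : ℝ => 1 - x ^ 2 * s ^ 2) (-(2 * r * s ^ 2)) r := by
    have h := ((hasDerivAt_pow 2 r).mul_const (s ^ 2)).const_sub 1
    convert h using 1
    exacts [rfl, rfl, by simp]
  have hsqrt : HasDerivAt (fun x : ℝ => Real.sqrt (1 - x ^ 2 * s ^ 2))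
      (-(2 * r * s ^ 2) / (2 * D)) r := hu.sqrt hD2.ne'
  -- derivative of inner function f
  have hf : HasDerivAt (fun x : ℝ => x * c / Real.sqrt (1 - x ^ 2 * s ^ 2))
      ((c * D - r * c * (-(2 * r * s ^ 2) / (2 * D))) / D ^ 2) r := by
    have h := ((hasDerivAt_id r).mul_const c).div hsqrt hDpos.ne'
    simp only [id_eq, one_mul] at h
    rwa [← hD_def] at h
  -- composition with arccos
  have hcomp : HasDerivAt (fun x : ℝ => arccos (x * c / Real.sqrt (1 - x ^ 2 * s ^ 2)))
      (-(1 / Real.sqrt (1 - (r * c / D) ^ 2)) *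
        ((c * D - r * c * (-(2 * r * s ^ 2) / (2 * D))) / D ^ 2)) r :=
    (hasDerivAt_arccos hfm1 hf1).comp (h₂ := arccos) r hf
  have houter : HasDerivAt arccos (-(1 / E)) r :=
    hasDerivAt_arccos (by linarith) (by linarith)
  have htotal := houter.sub (hcomp.const_mul c)
  constructor
  · convert htotal using 1
    · rfl
    · rfl
    · rfl
    rw [hkey, hden]
    field_simp
    linear_combination s ^ 2 * hDsq - s ^ 2 * hEsq - (s ^ 2 * r ^ 2 + D ^ 2) * hsc
  · rw [hden]
    have : 0 < 2 * E * s ^ 2 / (2 * D ^ 2) := by positivity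
    linarith
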